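/- Let (M,g) be a pseudo-Riemannian manifold of dimension n with a null line distribution L ⊂ TM. Then the Ricci tensor satisfies Ric(X,·) = 0 for all X ∈ L⊥ if and only if, locally, there exist a vector field K tangent to L and a smooth function φ such that Ric = φ·g(K,·)⊗g(K,·). Either condition implies the scalar curvature of g vanishes. -/

import Mathlib

/-- Trace of a rank-one map `v ↦ f v • x` is `f x`. -/
theorem trace_smulRight_aux {V : Type*} [AddCommGroup V] [Module ℝ V]
    [FiniteDimensional ℝ V] (f : V →ₗ[ℝ] ℝ) (x : V) :
    LinearMap.trace ℝ V (LinearMap.smulRight f x) = f x := by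
  have h1 : LinearMap.smulRight f x
      = (LinearMap.toSpanSingleton ℝ V x).comp f := by
    ext v; simp [LinearMap.toSpanSingleton_apply]
  rw [h1, LinearMap.trace_comp_comm']
  have h2 : f.comp (LinearMap.toSpanSingleton ℝ V x) = (f x) • LinearMap.id := by
    ext t; simp [LinearMap.toSpanSingleton_apply, mul_comm]
  rw [h2, map_smul, LinearMap.trace_id]
  simp

/-- Pointwise (linear-algebra) form of the paper's lemma: on a
tangent space V with non-degenerate symmetric bilinear form g (the metric), a
null line L spanned by K₀ ≠ 0 with g(K₀,K₀) = 0, and symmetric bilinear form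
Ric (the Ricci tensor), realised by the g-symmetric endomorphism `ricEnd`:
Ric(X,·) = 0 for all X ∈ L⊥ if and only if there are a vector K tangent to L
and a scalar φ with Ric = φ·g(K,·)⊗g(K,·); and either condition implies that
the scalar curvature (the g-trace of Ric, i.e. the trace of `ricEnd`) vanishes. -/
theorem ricci_null_line_characterisation
    {V : Type*} [AddCommGroup V] [Module ℝ V] [FiniteDimensional ℝ V]
    (g Ric : LinearMap.BilinForm ℝ V)
    (hg : g.Nondegenerate) (hgsymm : g.IsSymm) (hRsymm : Ric.IsSymm)
    (K₀ : V) (hK₀ : K₀ ≠ 0) (hnull : g K₀ K₀ = 0)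
    (ricEnd : V →ₗ[ℝ] V) (hric : ∀ v w, g (ricEnd v) w = Ric v w) :
    ((∀ v, g K₀ v = 0 → Ric v = 0) ↔
      ∃ (φ : ℝ) (K : V), (∃ l : ℝ, K = l • K₀) ∧
        ∀ v w, Ric v w = φ * g K v * g K w) ∧
    (((∀ v, g K₀ v = 0 → Ric v = 0) ∨
      (∃ (φ : ℝ) (K : V), (∃ l : ℝ, K = l • K₀) ∧
        ∀ v w, Ric v w = φ * g K v * g K w)) →
      LinearMap.trace ℝ V ricEnd = 0) := by
  -- find u with g K₀ u ≠ 0, normalise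
  obtain ⟨u, hu⟩ : ∃ u, g K₀ u ≠ 0 := by
    by_contra h
    push_neg at h
    exact hK₀ (hg.1 K₀ h)
  set v₁ : V := (g K₀ u)⁻¹ • u with hv₁def
  have hv₁ : g K₀ v₁ = 1 := by
    simp [hv₁def, inv_mul_cancel₀ hu]
  have hiff : (∀ v, g K₀ v = 0 → Ric v = 0) ↔
      ∃ (φ : ℝ) (K : V), (∃ l : ℝ, K = l • K₀) ∧
        ∀ v w, Ric v w = φ * g K v * g K w := by
    constructor
    · intro h
      refine ⟨Ric v₁ v₁, K₀, ⟨1, (one_smul _ _).symm⟩, fun v w => ?_⟩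
      have h1 : ∀ x, g K₀ x = 0 → ∀ y, Ric x y = 0 := fun x hx y => by
        rw [h x hx]; rfl
      have hv : g K₀ (v - g K₀ v • v₁) = 0 := by
        simp [hv₁]
      have hw : g K₀ (w - g K₀ w • v₁) = 0 := by
        simp [hv₁]
      have e1 : Ric v w = g K₀ v * Ric v₁ w := by
        have := h1 _ hv w
        simp only [map_sub, map_smul, LinearMap.sub_apply, LinearMap.smul_apply,
          smul_eq_mul] at this
        linarith
      have e2 : Ric v₁ w = g K₀ w * Ric v₁ v₁ := by
        have h3 := h1 _ hw v₁
        have h4 : Ric v₁ (w - g K₀ w • v₁) = 0 := by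
          rw [← LinearMap.BilinForm.isSymm_def.mp hRsymm]; simpa using h3
        simp only [map_sub, map_smul, smul_eq_mul] at h4
        linarith
      rw [e1, e2]; ring
    · rintro ⟨φ, K, ⟨l, rfl⟩, hK⟩ v hv
      ext w
      have := hK v w
      simp only [map_smul, LinearMap.smul_apply, smul_eq_mul, hv] at this
      simp [this]
  refine ⟨hiff, fun h => ?_⟩
  have hE : ∃ (φ : ℝ) (K : V), (∃ l : ℝ, K = l • K₀) ∧
      ∀ v w, Ric v w = φ * g K v * g K w := by
    rcases h with h | h
    · exact hiff.mp h
    · exact h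
  obtain ⟨φ, K, ⟨l, hl⟩, hK⟩ := hE
  have hKK : g K K = 0 := by
    subst hl
    simp [hnull]
  have hEnd : ricEnd = LinearMap.smulRight (φ • (g K)) K := by
    ext v
    apply sub_eq_zero.mp
    apply hg.1
    intro w
    have h5 : g ((φ * g K v) • K) w = φ * g K v * g K w := by
      simp [mul_assoc]
    simp only [map_sub, LinearMap.sub_apply, LinearMap.smulRight_apply,
      LinearMap.smul_apply, smul_eq_mul, smul_smul]
    rw [hric]
    rw [hK v w]
    have h6 : g ((φ * g K v) • K) w = (φ * g K v) * g K w := by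
      simp [mul_assoc]
    simp only [map_smul, LinearMap.smul_apply, smul_eq_mul] at *
    ring
  rw [hEnd, trace_smulRight_aux]
  simp [hKK]
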